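/- arXiv:cs/0607076 — 12 statements merged into one kernel-verified Lean document; each statement's English description precedes it below -/
import Mathlib

section
/- Let α be a real number with 0 < α < 1/2 and let m ≥ 0 be an integer. Then ∑_{i=m}^{2m} C(2m,i) α^i (1−α)^{2m−i} ≤ ((1−α)/(1−2α)) · (4α(1−α))^m, where C(n,k) denotes the binomial coefficient. -/
lemma choose_le_two_pow' (n k : ℕ) : Nat.choose n k ≤ 2 ^ n := by
  rcases le_or_gt k n with h | h
  · calc Nat.choose n k ≤ ∑ j ∈ Finset.range (n + 1), Nat.choose n j :=
          Finset.single_le_sum (f := fun j => Nat.choose n j) (fun _ _ => Nat.zero_le _)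
            (Finset.mem_range.mpr (Nat.lt_succ_of_le h))
      _ = 2 ^ n := Nat.sum_range_choose n
  · rw [Nat.choose_eq_zero_of_lt h]; positivity

/-- Bound on the probability that at least half of `2m` indices are incorrect. -/
theorem binomial_tail_bound (α : ℝ) (hα0 : 0 < α) (hα1 : α < 1 / 2) (m : ℕ) :
    ∑ i ∈ Finset.Icc m (2 * m), (Nat.choose (2 * m) i : ℝ) * α ^ i * (1 - α) ^ (2 * m - i) ≤
      (1 - α) / (1 - 2 * α) * (4 * α * (1 - α)) ^ m := by
  have h1 : (0:ℝ) < 1 - α := by linarith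
  have h2 : (0:ℝ) < 1 - 2 * α := by linarith
  set r : ℝ := α / (1 - α) with hr
  have hr0 : 0 ≤ r := div_nonneg hα0.le h1.le
  have hr1 : r < 1 := (div_lt_one h1).2 (by linarith)
  have hre : ∑ i ∈ Finset.Icc m (2 * m),
      (Nat.choose (2 * m) i : ℝ) * α ^ i * (1 - α) ^ (2 * m - i)
      = ∑ j ∈ Finset.range (m + 1),
        (Nat.choose (2 * m) (m + j) : ℝ) * α ^ (m + j) * (1 - α) ^ (2 * m - (m + j)) := by
    have e1 : Finset.Icc m (2 * m) = Finset.Ico m (2 * m + 1) := by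
      rw [Finset.Ico_add_one_right_eq_Icc]
    have e2 : 2 * m + 1 - m = m + 1 := by omega
    rw [e1, Finset.sum_Ico_eq_sum_range, e2]
  rw [hre]
  have key : ∀ j ∈ Finset.range (m + 1),
      (Nat.choose (2 * m) (m + j) : ℝ) * α ^ (m + j) * (1 - α) ^ (2 * m - (m + j))
      ≤ 4 ^ m * (α * (1 - α)) ^ m * r ^ j := by
    intro j hj
    have hjm : j ≤ m := Nat.lt_succ_iff.mp (Finset.mem_range.mp hj)
    have hsub : 2 * m - (m + j) = m - j := by omega
    have hch : (Nat.choose (2 * m) (m + j) : ℝ) ≤ 4 ^ m := by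
      have := choose_le_two_pow' (2 * m) (m + j)
      have h4 : (2:ℕ) ^ (2 * m) = 4 ^ m := by
        rw [pow_mul]; norm_num
      calc (Nat.choose (2 * m) (m + j) : ℝ) ≤ ((2:ℕ) ^ (2 * m) : ℕ) := by exact_mod_cast this
        _ = 4 ^ m := by rw [h4]; push_cast; ring
    have hpow : α ^ (m + j) * (1 - α) ^ (2 * m - (m + j)) = (α * (1 - α)) ^ m * r ^ j := by
      have e3 : (1 - α) ^ m = (1 - α) ^ (m - j) * (1 - α) ^ j := by
        rw [← pow_add]; congr 1; omega
      rw [hsub, hr, div_pow, mul_pow, pow_add, e3]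
      field_simp
    calc (Nat.choose (2 * m) (m + j) : ℝ) * α ^ (m + j) * (1 - α) ^ (2 * m - (m + j))
        = (Nat.choose (2 * m) (m + j) : ℝ) * ((α * (1 - α)) ^ m * r ^ j) := by
          rw [mul_assoc, hpow]
      _ ≤ 4 ^ m * ((α * (1 - α)) ^ m * r ^ j) := by
          apply mul_le_mul_of_nonneg_right hch
          positivity
      _ = 4 ^ m * (α * (1 - α)) ^ m * r ^ j := by ring
  calc ∑ j ∈ Finset.range (m + 1),
        (Nat.choose (2 * m) (m + j) : ℝ) * α ^ (m + j) * (1 - α) ^ (2 * m - (m + j))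
      ≤ ∑ j ∈ Finset.range (m + 1), 4 ^ m * (α * (1 - α)) ^ m * r ^ j :=
        Finset.sum_le_sum key
    _ = 4 ^ m * (α * (1 - α)) ^ m * ∑ j ∈ Finset.range (m + 1), r ^ j := by
        rw [Finset.mul_sum]
    _ ≤ 4 ^ m * (α * (1 - α)) ^ m * ((1 - α) / (1 - 2 * α)) := by
        apply mul_le_mul_of_nonneg_left _ (by positivity)
        have hgeom : ∑ j ∈ Finset.range (m + 1), r ^ j = (1 - r ^ (m + 1)) / (1 - r) := by
          rw [geom_sum_eq (by linarith : r ≠ 1)]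
          rw [div_eq_div_iff (by linarith) (by linarith)]
          ring
        rw [hgeom]
        have h1r : 1 - r = (1 - 2 * α) / (1 - α) := by
          rw [hr, eq_div_iff h1.ne', sub_mul, div_mul_cancel₀ _ h1.ne']; ring
        rw [h1r, div_div_eq_mul_div, div_le_div_iff₀ h2 h2]
        have hrp : 0 ≤ r ^ (m + 1) := by positivity
        nlinarith [mul_pos h1 h2]
    _ = (1 - α) / (1 - 2 * α) * (4 * α * (1 - α)) ^ m := by
        rw [mul_pow, mul_pow]; ring
end

section
/- Let α and ε be real numbers with 0 < α < 1/2 and 0 < ε < 1, and let m be a natural number with m ≥ log(((1−2α)/(1−α)) ε) / log(4α(1−α)). Then ∑_{i=m}^{2m} C(2m,i) α^i (1−α)^{2m−i} ≤ ε, where C(n,k) denotes the binomial coefficient. -/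
lemma choose_le_two_pow'_s4 (n i : ℕ) : n.choose i ≤ 2 ^ n := by
  rcases le_or_gt i n with h | h
  · calc n.choose i ≤ ∑ j ∈ Finset.range (n + 1), n.choose j :=
        Finset.single_le_sum (fun _ _ => Nat.zero_le _)
          (Finset.mem_range.mpr (Nat.lt_succ_of_le h))
    _ = 2 ^ n := Nat.sum_range_choose n
  · simp [Nat.choose_eq_zero_of_lt h]

/-- Quantitative content of Lemma 1's claim that `Pr(𝒜₂) ≤ ε` for large enough `k = 2m`. -/
theorem binomial_tail_le_eps (α ε : ℝ) (hα0 : 0 < α) (hα1 : α < 1 / 2)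
    (hε0 : 0 < ε) (hε1 : ε < 1) (m : ℕ)
    (hm : (m : ℝ) ≥ Real.log ((1 - 2 * α) / (1 - α) * ε) / Real.log (4 * α * (1 - α))) :
    ∑ i ∈ Finset.Icc m (2 * m), (Nat.choose (2 * m) i : ℝ) * α ^ i * (1 - α) ^ (2 * m - i)
      ≤ ε := by
  have h1 : (0:ℝ) < 1 - α := by linarith
  have h12 : (0:ℝ) < 1 - 2 * α := by linarith
  have hq0 : (0:ℝ) < 4 * α * (1 - α) := by positivity
  have hq1 : 4 * α * (1 - α) < 1 := by nlinarith [sq_nonneg (1 - 2 * α), sq_pos_of_ne_zero (a := 1 - 2*α) (by linarith)]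
  have hc0 : (0:ℝ) < (1 - 2 * α) / (1 - α) * ε := by positivity
  have hlogq : Real.log (4 * α * (1 - α)) < 0 := Real.log_neg hq0 hq1
  -- key exponential bound
  have h2 : (m : ℝ) * Real.log (4 * α * (1 - α)) ≤ Real.log ((1 - 2 * α) / (1 - α) * ε) :=
    (div_le_iff_of_neg hlogq).mp hm
  have hpow : (4 * α * (1 - α)) ^ m ≤ (1 - 2 * α) / (1 - α) * ε := by
    calc (4 * α * (1 - α)) ^ m = Real.exp (Real.log ((4 * α * (1 - α)) ^ m)) :=
          (Real.exp_log (pow_pos hq0 m)).symm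
      _ = Real.exp ((m : ℝ) * Real.log (4 * α * (1 - α))) := by rw [Real.log_pow]
      _ ≤ Real.exp (Real.log ((1 - 2 * α) / (1 - α) * ε)) := Real.exp_le_exp.mpr h2
      _ = (1 - 2 * α) / (1 - α) * ε := Real.exp_log hc0
  set r : ℝ := α / (1 - α) with hr
  have hr0 : 0 ≤ r := by positivity
  have hr1 : r < 1 := (div_lt_one h1).mpr (by linarith)
  -- termwise bound
  have key : ∀ i ∈ Finset.Icc m (2 * m),
      (Nat.choose (2 * m) i : ℝ) * α ^ i * (1 - α) ^ (2 * m - i)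
        ≤ (4 * α * (1 - α)) ^ m * r ^ (i - m) := by
    intro i hi
    rw [Finset.mem_Icc] at hi
    have hle : (Nat.choose (2 * m) i : ℝ) ≤ 4 ^ m := by
      calc (Nat.choose (2 * m) i : ℝ) ≤ (2 : ℝ) ^ (2 * m) := by
            exact_mod_cast choose_le_two_pow'_s4 (2 * m) i
        _ = 4 ^ m := by rw [pow_mul]; norm_num
    have hprod : α ^ i * (1 - α) ^ (2 * m - i) = α ^ m * (1 - α) ^ m * r ^ (i - m) := by
      obtain ⟨j, hj, rfl⟩ : ∃ j, j ≤ m ∧ i = m + j := ⟨i - m, by omega, by omega⟩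
      have hi2 : 2 * m - (m + j) = m - j := by omega
      have hi3 : m + j - m = j := by omega
      rw [hi2, hi3, pow_add, hr, div_pow,
        pow_sub₀ (1 - α) (by linarith) hj]
      field_simp
    calc (Nat.choose (2 * m) i : ℝ) * α ^ i * (1 - α) ^ (2 * m - i)
        = (Nat.choose (2 * m) i : ℝ) * (α ^ i * (1 - α) ^ (2 * m - i)) := by ring
      _ ≤ 4 ^ m * (α ^ m * (1 - α) ^ m * r ^ (i - m)) := by
          rw [hprod]
          exact mul_le_mul_of_nonneg_right hle (by positivity)
      _ = (4 * α * (1 - α)) ^ m * r ^ (i - m) := by rw [mul_pow, mul_pow]; ring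
  calc ∑ i ∈ Finset.Icc m (2 * m), (Nat.choose (2 * m) i : ℝ) * α ^ i * (1 - α) ^ (2 * m - i)
      ≤ ∑ i ∈ Finset.Icc m (2 * m), (4 * α * (1 - α)) ^ m * r ^ (i - m) :=
        Finset.sum_le_sum key
    _ = (4 * α * (1 - α)) ^ m * ∑ i ∈ Finset.Icc m (2 * m), r ^ (i - m) := by
        rw [Finset.mul_sum]
    _ ≤ (4 * α * (1 - α)) ^ m * (1 / (1 - r)) := by
        refine mul_le_mul_of_nonneg_left ?_ (le_of_lt (pow_pos hq0 m))
        have : ∑ i ∈ Finset.Icc m (2 * m), r ^ (i - m)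
            = ∑ j ∈ Finset.range (m + 1), r ^ j := by
          rw [show Finset.Icc m (2 * m) = Finset.Ico m (2 * m + 1) by
            rw [Finset.Ico_add_one_right_eq_Icc]]
          rw [Finset.sum_Ico_eq_sum_range]
          refine Finset.sum_congr (by congr 1; omega) fun j _ => by
            congr 1; omega
        rw [this]
        have := geom_sum_Ico_le_of_lt_one hr0 hr1 (m := 0) (n := m + 1)
        simpa using this
    _ ≤ ε := by
        have h1r : 1 - r = (1 - 2 * α) / (1 - α) := by
          rw [hr]; field_simp; ring
        rw [mul_one_div, div_le_iff₀ (by rw [h1r]; positivity)]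
        rw [h1r] at *
        nlinarith [hpow]
end

section
/- Fix an integer v ≥ 1 and real numbers p1, p2, p3, β with 0 ≤ p1 < 1, 0 ≤ p2 ≤ 1, 0 ≤ p3, p1 + p3 ≤ 1, and 0 ≤ β < 1, and let f, f' be as in the error-probability Bellman recursion. Then for every i < v, f'(i) = f(i) + p2/(1−β); in particular the maximum in the defining equation for f'(i) is attained by its first argument p2 + β f'(i) + (1−β) f(i). -/
/-- In the error-probability Bellman recursion, the maximum is attained by its first
argument, and `f'(i) = f(i) + p2/(1-β)` for every `i < v`. -/
theorem error_bellman_max_first (v : ℕ) (hv : 1 ≤ v) (p1 p2 p3 β : ℝ)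
    (hp10 : 0 ≤ p1) (hp11 : p1 < 1) (hp20 : 0 ≤ p2) (hp21 : p2 ≤ 1)
    (hp30 : 0 ≤ p3) (hp13 : p1 + p3 ≤ 1) (hβ0 : 0 ≤ β) (hβ1 : β < 1)
    (f f' : ℕ → ℝ) (hf : ∀ i, 0 ≤ f i) (hf' : ∀ i, 0 ≤ f' i)
    (hfv : f v = 0) (hf'v : f' v = 0)
    (hfrec : ∀ i < v,
      f i = p3 + (1 - p1 - p3) * f (i + 1) + p1 * β * f' i + p1 * (1 - β) * f i)
    (hf'rec : ∀ i < v,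
      f' i = max (p2 + β * f' i + (1 - β) * f i)
        (p3 + (1 - p1 - p3) * f' (i + 1) + p1 * β * f' i + p1 * (1 - β) * f i)) :
    ∀ i < v, f' i = f i + p2 / (1 - β) ∧ f' i = p2 + β * f' i + (1 - β) * f i := by
  have hβ' : (0:ℝ) < 1 - β := by linarith
  set c := p2 / (1 - β) with hcdef
  have hcβ : (1 - β) * c = p2 := by
    rw [hcdef]; field_simp
  have hc0 : 0 ≤ c := div_nonneg hp20 hβ'.le
  have step : ∀ i, i < v → f' (i + 1) ≤ f (i + 1) + c →
      f' i = f i + c ∧ f' i = p2 + β * f' i + (1 - β) * f i := by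
    intro i hi hB1
    have hmax := hf'rec i hi
    have hA_le : p2 + β * f' i + (1 - β) * f i ≤ f' i := by
      exact (le_max_left _ _).trans hmax.ge
    have h1 : f i + c ≤ f' i := by
      have h2 : (1 - β) * (f i + c) ≤ (1 - β) * f' i := by nlinarith
      exact le_of_mul_le_mul_left h2 hβ'
    have hfi := hfrec i hi
    have hB_le : p3 + (1 - p1 - p3) * f' (i + 1) + p1 * β * f' i + p1 * (1 - β) * f i
        ≤ f i + c := by
      nlinarith [mul_nonneg (by linarith : (0:ℝ) ≤ 1 - p1 - p3)
          (by linarith : (0:ℝ) ≤ f (i + 1) + c - f' (i + 1)),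
        mul_nonneg (by linarith : (0:ℝ) ≤ p1 + p3) hc0]
    have hA_ge : f i + c ≤ p2 + β * f' i + (1 - β) * f i := by
      nlinarith [mul_nonneg hβ0 (by linarith : (0:ℝ) ≤ f' i - f i - c)]
    have hfi' : f' i = p2 + β * f' i + (1 - β) * f i := by
      rw [max_eq_left (le_trans hB_le hA_ge)] at hmax
      exact hmax
    refine ⟨?_, hfi'⟩
    have h3 : (1 - β) * f' i = (1 - β) * (f i + c) := by nlinarith
    exact mul_left_cancel₀ (ne_of_gt hβ') h3
  have key : ∀ d i, i + d = v → f' i ≤ f i + c := by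
    intro d
    induction d with
    | zero =>
      intro i h
      simp only [Nat.add_zero] at h
      subst h
      rw [hfv, hf'v]; linarith
    | succ d ih =>
      intro i h
      have hi : i < v := by omega
      exact (step i hi (ih (i + 1) (by omega))).1.le
  intro i hi
  exact step i hi (key (v - (i + 1)) (i + 1) (by omega))
end

section
/- Fix an integer v ≥ 1 and real numbers p1, p2, p3, β with 0 ≤ p1 < 1, 0 ≤ p2 ≤ 1, 0 ≤ p3, p1 + p3 ≤ 1, and 0 ≤ β < 1, and let f, f' be as in the error-probability Bellman recursion. Then for every i < v, f(i) = p3/(1−p1) + p1 p2 β/((1−p1)(1−β)) + ((1−p1−p3)/(1−p1)) · f(i+1). -/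
/-- One-step relation for `f` in the error-probability Bellman recursion. -/
theorem error_bellman_step (v : ℕ) (hv : 1 ≤ v) (p1 p2 p3 β : ℝ)
    (hp10 : 0 ≤ p1) (hp11 : p1 < 1) (hp20 : 0 ≤ p2) (hp21 : p2 ≤ 1)
    (hp30 : 0 ≤ p3) (hp13 : p1 + p3 ≤ 1) (hβ0 : 0 ≤ β) (hβ1 : β < 1)
    (f f' : ℕ → ℝ) (hf : ∀ i, 0 ≤ f i) (hf' : ∀ i, 0 ≤ f' i)
    (hfv : f v = 0) (hf'v : f' v = 0)
    (hfrec : ∀ i < v,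
      f i = p3 + (1 - p1 - p3) * f (i + 1) + p1 * β * f' i + p1 * (1 - β) * f i)
    (hf'rec : ∀ i < v,
      f' i = max (p2 + β * f' i + (1 - β) * f i)
        (p3 + (1 - p1 - p3) * f' (i + 1) + p1 * β * f' i + p1 * (1 - β) * f i)) :
    ∀ i < v, f i = p3 / (1 - p1) + p1 * p2 * β / ((1 - p1) * (1 - β))
      + (1 - p1 - p3) / (1 - p1) * f (i + 1) := by
  have hβ : (0:ℝ) < 1 - β := by linarith
  have hp1 : (0:ℝ) < 1 - p1 := by linarith
  have hc0 : 0 ≤ p2 / (1 - β) := div_nonneg hp20 hβ.le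
  -- upper bound: f' i ≤ f i + p2/(1-β), by downward induction
  have key : ∀ k : ℕ, ∀ i : ℕ, v = i + k → f' i - f i ≤ p2 / (1 - β) := by
    intro k
    induction k with
    | zero => intro i hi; simp at hi; subst hi; rw [hfv, hf'v]; simpa using hc0
    | succ k ih =>
      intro i hi
      have hiv : i < v := by omega
      have ih1 : f' (i+1) - f (i+1) ≤ p2 / (1 - β) := ih (i+1) (by omega)
      have hmax := hf'rec i hiv
      have hfr := hfrec i hiv
      rcases max_choice (p2 + β * f' i + (1 - β) * f i)
        (p3 + (1 - p1 - p3) * f' (i + 1) + p1 * β * f' i + p1 * (1 - β) * f i) with h | h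
      · rw [h] at hmax
        have : (1 - β) * (f' i - f i) = p2 := by linarith
        rw [le_div_iff₀ hβ]
        linarith
      · rw [h] at hmax
        have heq : f' i - f i = (1 - p1 - p3) * (f' (i+1) - f (i+1)) := by
          linear_combination hmax - hfr
        have ha : (0:ℝ) ≤ 1 - p1 - p3 := by linarith
        calc f' i - f i = (1 - p1 - p3) * (f' (i+1) - f (i+1)) := heq
          _ ≤ (1 - p1 - p3) * (p2 / (1 - β)) := mul_le_mul_of_nonneg_left ih1 ha
          _ ≤ 1 * (p2 / (1 - β)) := mul_le_mul_of_nonneg_right (by linarith) hc0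
          _ = p2 / (1 - β) := one_mul _
  -- equality: f' i = f i + p2/(1-β) for i < v
  have hfeq : ∀ i < v, f' i = f i + p2 / (1 - β) := by
    intro i hiv
    have hub := key (v - i) i (by omega)
    have hlb : p2 + β * f' i + (1 - β) * f i ≤ f' i := by
      conv_rhs => rw [hf'rec i hiv]
      exact le_max_left _ _
    have : p2 / (1 - β) ≤ f' i - f i := by
      rw [div_le_iff₀ hβ]; nlinarith
    linarith
  intro i hiv
  have hfr := hfrec i hiv
  rw [hfeq i hiv] at hfr
  field_simp at hfr ⊢
  linear_combination hfr
end

section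
/- Fix an integer v ≥ 1 and real numbers p1, p2, p3, β with 0 ≤ p1 < 1, 0 ≤ p2 ≤ 1, 0 ≤ p3, p1 + p3 ≤ 1, and 0 ≤ β < 1, and let f, f' be as in the error-probability Bellman recursion. Then for every i ≤ v, 0 ≤ f(i) ≤ (p3/(1−p1) + p1 p2 β/((1−p1)(1−β))) · (v − i). -/
/-- Linear bound on `f` in the error-probability Bellman recursion. -/
theorem error_bellman_linear_bound (v : ℕ) (hv : 1 ≤ v) (p1 p2 p3 β : ℝ)
    (hp10 : 0 ≤ p1) (hp11 : p1 < 1) (hp20 : 0 ≤ p2) (hp21 : p2 ≤ 1)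
    (hp30 : 0 ≤ p3) (hp13 : p1 + p3 ≤ 1) (hβ0 : 0 ≤ β) (hβ1 : β < 1)
    (f f' : ℕ → ℝ) (hf : ∀ i, 0 ≤ f i) (hf' : ∀ i, 0 ≤ f' i)
    (hfv : f v = 0) (hf'v : f' v = 0)
    (hfrec : ∀ i < v,
      f i = p3 + (1 - p1 - p3) * f (i + 1) + p1 * β * f' i + p1 * (1 - β) * f i)
    (hf'rec : ∀ i < v,
      f' i = max (p2 + β * f' i + (1 - β) * f i)
        (p3 + (1 - p1 - p3) * f' (i + 1) + p1 * β * f' i + p1 * (1 - β) * f i)) :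
    ∀ i ≤ v, 0 ≤ f i ∧
      f i ≤ (p3 / (1 - p1) + p1 * p2 * β / ((1 - p1) * (1 - β))) * ((v : ℝ) - i) := by
  have hb : (0:ℝ) < 1 - β := by linarith
  have h1 : (0:ℝ) < 1 - p1 := by linarith
  have h13 : (0:ℝ) ≤ 1 - p1 - p3 := by linarith
  set C := p3 / (1 - p1) + p1 * p2 * β / ((1 - p1) * (1 - β)) with hCdef
  have hC0 : 0 ≤ C := by
    apply add_nonneg
    · exact div_nonneg hp30 h1.le
    · exact div_nonneg (by positivity) (by positivity)
  have hC1 : (1 - p1) * C = p3 + p1 * p2 * β / (1 - β) := by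
    rw [hCdef]
    field_simp [hCdef]
  have hp2b : 0 ≤ p2 / (1 - β) := div_nonneg hp20 hb.le
  clear_value C
  have key : ∀ d i, i + d = v → f i ≤ C * d ∧ f' i - f i ≤ p2 / (1 - β) := by
    intro d
    induction d with
    | zero =>
      intro i h
      simp only [Nat.add_zero] at h
      subst h
      simp [hfv, hf'v, hp2b]
    | succ d ih =>
      intro i h
      have hiv : i < v := by omega
      obtain ⟨ih1, ih2⟩ := ih (i + 1) (by omega)
      have hfi := hfrec i hiv
      have hmax := hf'rec i hiv
      have hd0 : (0:ℝ) ≤ (d:ℝ) := Nat.cast_nonneg d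
      -- first establish the f' - f bound
      have h2 : f' i - f i ≤ p2 / (1 - β) := by
        rcases max_choice (p2 + β * f' i + (1 - β) * f i)
          (p3 + (1 - p1 - p3) * f' (i + 1) + p1 * β * f' i + p1 * (1 - β) * f i) with hA | hB
        · have heq : (f' i - f i) * (1 - β) = p2 := by
            rw [hA] at hmax
            linear_combination hmax
          rw [le_div_iff₀ hb]
          linarith
        · rw [hB] at hmax
          have heq : f' i - f i = (1 - p1 - p3) * (f' (i + 1) - f (i + 1)) := by
            linear_combination hmax - hfi
          nlinarith [mul_le_mul_of_nonneg_left ih2 h13]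
      constructor
      · have heq : (1 - p1) * f i
            = p3 + (1 - p1 - p3) * f (i + 1) + p1 * β * (f' i - f i) := by
          linear_combination hfi
        have step1 : (1 - p1) * f i ≤ (1 - p1) * (C * ((d:ℝ) + 1)) := by
          have hint2 : p1 * β * (f' i - f i) ≤ p1 * β * (p2 / (1 - β)) :=
            mul_le_mul_of_nonneg_left h2 (mul_nonneg hp10 hβ0)
          have hint3 : p1 * β * (p2 / (1 - β)) ≤ p1 * p2 * β / (1 - β) := by
            exact le_of_eq (by ring)
          nlinarith [mul_le_mul_of_nonneg_left ih1 h13,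
            mul_nonneg (mul_nonneg hp30 hC0) hd0]
        have := le_of_mul_le_mul_left step1 h1
        push_cast
        linarith
      · exact h2
  intro i hi
  obtain ⟨hb1, _⟩ := key (v - i) i (by omega)
  refine ⟨hf i, ?_⟩
  have : ((v - i : ℕ) : ℝ) = (v : ℝ) - i := by
    push_cast [Nat.cast_sub hi]
    ring
  rw [this] at hb1
  exact hb1
end

section
/- Fix an integer v ≥ 1 and real numbers p1, p2, p3, β with 0 ≤ p1 < 1, 0 ≤ p2 ≤ 1, 0 ≤ p3, p1 + p3 ≤ 1, and 0 ≤ β < 1, and let f, f' be as in the error-probability Bellman recursion. Then (1−β) f(0) + β f'(0) ≤ (p1 p2 β + p3 (1−β)) · v / ((1−p1)(1−β)) + p2 β/(1−β). -/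
/-- Bound on the total error probability `(1-β) f(0) + β f'(0)`. -/
theorem error_bellman_total_bound (v : ℕ) (hv : 1 ≤ v) (p1 p2 p3 β : ℝ)
    (hp10 : 0 ≤ p1) (hp11 : p1 < 1) (hp20 : 0 ≤ p2) (hp21 : p2 ≤ 1)
    (hp30 : 0 ≤ p3) (hp13 : p1 + p3 ≤ 1) (hβ0 : 0 ≤ β) (hβ1 : β < 1)
    (f f' : ℕ → ℝ) (hf : ∀ i, 0 ≤ f i) (hf' : ∀ i, 0 ≤ f' i)
    (hfv : f v = 0) (hf'v : f' v = 0)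
    (hfrec : ∀ i < v,
      f i = p3 + (1 - p1 - p3) * f (i + 1) + p1 * β * f' i + p1 * (1 - β) * f i)
    (hf'rec : ∀ i < v,
      f' i = max (p2 + β * f' i + (1 - β) * f i)
        (p3 + (1 - p1 - p3) * f' (i + 1) + p1 * β * f' i + p1 * (1 - β) * f i)) :
    (1 - β) * f 0 + β * f' 0 ≤
      (p1 * p2 * β + p3 * (1 - β)) * (v : ℝ) / ((1 - p1) * (1 - β)) + p2 * β / (1 - β) := by
  have h1p : (0:ℝ) < 1 - p1 := by linarith
  have h1b : (0:ℝ) < 1 - β := by linarith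
  set C : ℝ := (p1 * p2 * β + p3 * (1 - β)) / ((1 - p1) * (1 - β)) with hCdef
  set D : ℝ := p2 / (1 - β) with hDdef
  have hD : (1 - β) * D = p2 := by
    rw [hDdef]; field_simp
  have hC : (1 - p1) * C = p3 + p1 * β * D := by
    rw [hCdef, hDdef]; field_simp; ring
  have hDnn : 0 ≤ D := div_nonneg hp20 (le_of_lt h1b)
  have hCnn : 0 ≤ C := by
    apply div_nonneg
    · have h1 : 0 ≤ p1 * p2 * β := mul_nonneg (mul_nonneg hp10 hp20) hβ0
      have h2 : 0 ≤ p3 * (1 - β) := mul_nonneg hp30 (le_of_lt h1b)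
      linarith
    · positivity
  have key : ∀ k i, i + k = v → f i ≤ C * k ∧ f' i ≤ C * k + D := by
    intro k
    induction k with
    | zero =>
      intro i hi
      have : i = v := by omega
      subst this
      simp [hfv, hf'v, hDnn]
    | succ k ih =>
      intro i hi
      have hiv : i < v := by omega
      obtain ⟨ih1, ih2⟩ := ih (i + 1) (by omega)
      have e1 := hfrec i hiv
      have e2 := hf'rec i hiv
      have hk : (0:ℝ) ≤ (k : ℝ) := Nat.cast_nonneg k
      have hCk : (0 : ℝ) ≤ C * k := mul_nonneg hCnn hk
      have hP : p3 + (1 - p1 - p3) * f (i + 1) ≤ p3 + (1 - p1) * (C * k) := by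
        nlinarith [hf (i + 1)]
      have hQ : p3 + (1 - p1 - p3) * f' (i + 1) ≤ p3 + (1 - p1) * (C * k + D) := by
        nlinarith [hf' (i + 1)]
      have hcast : ((k : ℝ) + 1) = ((k + 1 : ℕ) : ℝ) := by push_cast; ring
      rcases max_choice (p2 + β * f' i + (1 - β) * f i)
        (p3 + (1 - p1 - p3) * f' (i + 1) + p1 * β * f' i + p1 * (1 - β) * f i) with h | h
      · rw [h] at e2
        have hfi' : f' i = f i + D := by
          have h2 : (1 - β) * f' i = (1 - β) * (f i + D) := by
            linear_combination e2 - hD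
          exact mul_left_cancel₀ (by linarith) h2
        have hfib : (1 - p1) * f i = p3 + (1 - p1 - p3) * f (i + 1) + p1 * β * D := by
          linear_combination e1 + p1 * β * hfi'
        have hstep : (1 - p1) * f i ≤ (1 - p1) * (C * k + C) := by
          linarith [hP, hC]
        have hfi : f i ≤ C * (k : ℝ) + C := le_of_mul_le_mul_left hstep h1p
        refine ⟨?_, ?_⟩
        · rw [← hcast]; linarith
        · rw [← hcast]; rw [hfi']; linarith
      · rw [h] at e2
        have hA : (1 - p1) * f i =
            (1 - p1 * β) * (p3 + (1 - p1 - p3) * f (i + 1)) +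
              p1 * β * (p3 + (1 - p1 - p3) * f' (i + 1)) := by
          linear_combination (1 - p1 * β) * e1 + p1 * β * e2
        have hB : (1 - p1) * f' i =
            p1 * (1 - β) * (p3 + (1 - p1 - p3) * f (i + 1)) +
              (1 - p1 * (1 - β)) * (p3 + (1 - p1 - p3) * f' (i + 1)) := by
          linear_combination p1 * (1 - β) * e1 + (1 - p1 * (1 - β)) * e2
        have hpb1 : 0 ≤ 1 - p1 * β := by
          have := mul_le_one₀ (le_of_lt hp11) hβ0 (le_of_lt hβ1)
          linarith
        have hpb2 : 0 ≤ p1 * β := mul_nonneg hp10 hβ0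
        have hpb3 : 0 ≤ p1 * (1 - β) := mul_nonneg hp10 (le_of_lt h1b)
        have hpb4 : 0 ≤ 1 - p1 * (1 - β) := by
          have := mul_le_one₀ (le_of_lt hp11) (le_of_lt h1b) (by linarith : 1 - β ≤ 1)
          linarith
        have m1 := mul_le_mul_of_nonneg_left hP hpb1
        have m2 := mul_le_mul_of_nonneg_left hQ hpb2
        have m3 := mul_le_mul_of_nonneg_left hP hpb3
        have m4 := mul_le_mul_of_nonneg_left hQ hpb4
        have n1 : 0 ≤ p1 * p1 * β * D :=
          mul_nonneg (mul_nonneg (mul_nonneg hp10 hp10) hβ0) hDnn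
        have n2 : 0 ≤ p1 * (1 - β) * (1 - p1) * D :=
          mul_nonneg (mul_nonneg hpb3 (le_of_lt h1p)) hDnn
        have n3 : 0 ≤ p1 * β * D := mul_nonneg hpb2 hDnn
        have hstepA : (1 - p1) * f i ≤ (1 - p1) * (C * k + C) := by
          linarith [hA, m1, m2, hC, n1]
        have hstepB : (1 - p1) * f' i ≤ (1 - p1) * (C * k + C + D) := by
          linarith [hB, m3, m4, hC, n2, n3]
        have hfi : f i ≤ C * (k : ℝ) + C := le_of_mul_le_mul_left hstepA h1p
        have hfi' : f' i ≤ C * (k : ℝ) + C + D := le_of_mul_le_mul_left hstepB h1p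
        refine ⟨?_, ?_⟩
        · rw [← hcast]; linarith
        · rw [← hcast]; linarith
  obtain ⟨h0, h0'⟩ := key v 0 (by omega)
  have q1 := mul_le_mul_of_nonneg_left h0 (le_of_lt h1b)
  have q2 := mul_le_mul_of_nonneg_left h0' hβ0
  have hgoal : (1 - β) * f 0 + β * f' 0 ≤ C * v + β * D := by linarith
  calc (1 - β) * f 0 + β * f' 0 ≤ C * v + β * D := hgoal
    _ = C * v + p2 * β / (1 - β) := by rw [hDdef]; ring
    _ = _ := by rw [hCdef]; ring
end

section
/- Fix an integer v ≥ 1 and real numbers p1, p2, p3, β with 0 ≤ p1 < 1, 0 ≤ p2 ≤ 1, 0 ≤ p3, p1 + p3 ≤ 1, and 0 ≤ β < 1. Let f, f' be as in the error-probability Bellman recursion, and let e, e' : ℕ → ℝ be nonnegative functions with e(v) = e'(v) = 0 satisfying, for every i < v, e(i) = p3 + (1−p1−p3) e(i+1) + p1 β e'(i) + p1 (1−β) e(i) and e'(i) = max{ p2 + (1−p2) β e'(i) + (1−p2)(1−β) e(i) , p3 + (1−p1−p3) e'(i+1) + p1 β e'(i) + p1 (1−β) e(i) }. Then e(i) ≤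 f(i) and e'(i) ≤ f'(i) for every i ≤ v. -/
/-- The exact maximal error probabilities `e, e'` are dominated by the relaxed
quantities `f, f'` of the error-probability Bellman recursion. -/
theorem exact_le_relaxed (v : ℕ) (hv : 1 ≤ v) (p1 p2 p3 β : ℝ)
    (hp10 : 0 ≤ p1) (hp11 : p1 < 1) (hp20 : 0 ≤ p2) (hp21 : p2 ≤ 1)
    (hp30 : 0 ≤ p3) (hp13 : p1 + p3 ≤ 1) (hβ0 : 0 ≤ β) (hβ1 : β < 1)
    (f f' : ℕ → ℝ) (hf : ∀ i, 0 ≤ f i) (hf' : ∀ i, 0 ≤ f' i)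
    (hfv : f v = 0) (hf'v : f' v = 0)
    (hfrec : ∀ i < v,
      f i = p3 + (1 - p1 - p3) * f (i + 1) + p1 * β * f' i + p1 * (1 - β) * f i)
    (hf'rec : ∀ i < v,
      f' i = max (p2 + β * f' i + (1 - β) * f i)
        (p3 + (1 - p1 - p3) * f' (i + 1) + p1 * β * f' i + p1 * (1 - β) * f i))
    (e e' : ℕ → ℝ) (he : ∀ i, 0 ≤ e i) (he' : ∀ i, 0 ≤ e' i)
    (hev : e v = 0) (he'v : e' v = 0)
    (herec : ∀ i < v,
      e i = p3 + (1 - p1 - p3) * e (i + 1) + p1 * β * e' i + p1 * (1 - β) * e i)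
    (he'rec : ∀ i < v,
      e' i = max (p2 + (1 - p2) * β * e' i + (1 - p2) * (1 - β) * e i)
        (p3 + (1 - p1 - p3) * e' (i + 1) + p1 * β * e' i + p1 * (1 - β) * e i)) :
    ∀ i ≤ v, e i ≤ f i ∧ e' i ≤ f' i := by
  have h13 : (0:ℝ) ≤ 1 - p1 - p3 := by linarith
  have hβ : (0:ℝ) < 1 - β := by linarith
  have hD : (0:ℝ) < 1 - p1 * (1 - β) := by nlinarith
  have h1p1 : (0:ℝ) < 1 - p1 := by linarith
  suffices h : ∀ d i, i + d = v → e i ≤ f i ∧ e' i ≤ f' i by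
    intro i hi; exact h (v - i) i (by omega)
  intro d
  induction d with
  | zero =>
    intro i hi
    have : i = v := by omega
    subst this
    simp [hev, he'v, hfv, hf'v]
  | succ d ih =>
    intro i hi
    have hiv : i < v := by omega
    obtain ⟨ih1, ih2⟩ := ih (i + 1) (by omega)
    have EE := herec i hiv
    have FF := hfrec i hiv
    have Emax := he'rec i hiv
    have F1 : p2 + β * f' i + (1 - β) * f i ≤ f' i :=
      le_of_le_of_eq (le_max_left _ _) (hf'rec i hiv).symm
    have F2 : p3 + (1 - p1 - p3) * f' (i + 1) + p1 * β * f' i + p1 * (1 - β) * f i ≤ f' i :=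
      le_of_le_of_eq (le_max_right _ _) (hf'rec i hiv).symm
    have key1 : (1 - p1 * (1 - β)) * (e i - f i) ≤ p1 * β * (e' i - f' i) := by
      nlinarith [mul_nonneg h13 (sub_nonneg.2 ih1)]
    rcases max_choice (p2 + (1 - p2) * β * e' i + (1 - p2) * (1 - β) * e i)
        (p3 + (1 - p1 - p3) * e' (i + 1) + p1 * β * e' i + p1 * (1 - β) * e i) with hc | hc
    · -- first branch of the max
      have hE : e' i = p2 + (1 - p2) * β * e' i + (1 - p2) * (1 - β) * e i := Emax.trans hc
      have key2 : e' i - f' i ≤ e i - f i := by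
        have h1 : (0:ℝ) ≤ p2 * β * e' i :=
          mul_nonneg (mul_nonneg hp20 hβ0) (he' i)
        have h2 : (0:ℝ) ≤ p2 * (1 - β) * e i :=
          mul_nonneg (mul_nonneg hp20 hβ.le) (he i)
        nlinarith [h1, h2]
      have hy : e' i ≤ f' i := by
        by_contra hcon
        push_neg at hcon
        have t := mul_le_mul_of_nonneg_left key2 hD.le
        have t3 := mul_pos h1p1 (sub_pos.2 hcon)
        linarith [t, key1, t3]
      have hx : e i ≤ f i := by
        by_contra hcon
        push_neg at hcon
        have t := mul_pos hD (sub_pos.2 hcon)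
        have t2 := mul_nonneg (mul_nonneg hp10 hβ0) (sub_nonneg.2 hy)
        linarith [t, key1, t2]
      exact ⟨hx, hy⟩
    · -- second branch of the max
      have hE : e' i = p3 + (1 - p1 - p3) * e' (i + 1) + p1 * β * e' i + p1 * (1 - β) * e i :=
        Emax.trans hc
      have key2 : (1 - p1 * β) * (e' i - f' i) ≤ p1 * (1 - β) * (e i - f i) := by
        nlinarith [mul_nonneg h13 (sub_nonneg.2 ih2)]
      have hy : e' i ≤ f' i := by
        have t1 := mul_le_mul_of_nonneg_left key1
          (show (0:ℝ) ≤ p1 * (1 - β) from mul_nonneg hp10 hβ.le)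
        have t2 := mul_le_mul_of_nonneg_left key2 hD.le
        by_contra hcon
        push_neg at hcon
        have t3 := mul_pos h1p1 (sub_pos.2 hcon)
        linarith [t1, t2, t3]
      have hx : e i ≤ f i := by
        by_contra hcon
        push_neg at hcon
        have t := mul_pos hD (sub_pos.2 hcon)
        have t2 := mul_nonneg (mul_nonneg hp10 hβ0) (sub_nonneg.2 hy)
        linarith [t, key1, t2]
      exact ⟨hx, hy⟩
end

section
/- Fix real numbers ε, β with 0 < ε < 1/2 and 0 ≤ β < 1, an integer v with 1 ≤ v ≤ 2/ε, and real numbers p1, p2, p3 with 0 ≤ p1 ≤ 2ε, 0 ≤ p2 ≤ 2ε, 0 ≤ p3 ≤ 2ε² and p1 + p3 ≤ 1. Let e, e' : ℕ → ℝ be nonnegative functions with e(v) = e'(v) = 0 satisfying, for every i < v, e(i) = p3 + (1−p1−p3) e(i+1) + p1 β e'(i) + p1 (1−β) e(i) and e'(i) = max{ p2 + (1−p2) β e'(i) + (1−p2)(1−β) e(i) , p3 + (1−p1−p3) e'(i+1) + p1 β e'(i) + p1 (1−β) e(i) }. Then (1−β) e(0) + β e'(0) ≤ ( (8β + 4(1−β))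 / ((1−2ε)(1−β)) + 2β/(1−β) ) · ε. -/
set_option maxHeartbeats 1600000


/-- Bound on the total error probability `P_e = (1-β) e(0) + β e'(0)` of the
"transmit-then-verify" protocol, showing `P_e → 0` as `ε → 0`. -/
theorem total_error_probability_bound (ε β : ℝ) (hε0 : 0 < ε) (hε1 : ε < 1 / 2)
    (hβ0 : 0 ≤ β) (hβ1 : β < 1) (v : ℕ) (hv1 : 1 ≤ v) (hv2 : (v : ℝ) ≤ 2 / ε)
    (p1 p2 p3 : ℝ) (hp10 : 0 ≤ p1) (hp11 : p1 ≤ 2 * ε)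
    (hp20 : 0 ≤ p2) (hp21 : p2 ≤ 2 * ε) (hp30 : 0 ≤ p3) (hp31 : p3 ≤ 2 * ε ^ 2)
    (hp13 : p1 + p3 ≤ 1)
    (e e' : ℕ → ℝ) (he : ∀ i, 0 ≤ e i) (he' : ∀ i, 0 ≤ e' i)
    (hev : e v = 0) (he'v : e' v = 0)
    (herec : ∀ i < v,
      e i = p3 + (1 - p1 - p3) * e (i + 1) + p1 * β * e' i + p1 * (1 - β) * e i)
    (he'rec : ∀ i < v,
      e' i = max (p2 + (1 - p2) * β * e' i + (1 - p2) * (1 - β) * e i)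
        (p3 + (1 - p1 - p3) * e' (i + 1) + p1 * β * e' i + p1 * (1 - β) * e i)) :
    (1 - β) * e 0 + β * e' 0 ≤
      ((8 * β + 4 * (1 - β)) / ((1 - 2 * ε) * (1 - β)) + 2 * β / (1 - β)) * ε := by
  have hβpos : (0:ℝ) < 1 - β := by linarith
  have h12ε : (0:ℝ) < 1 - 2 * ε := by linarith
  have hp1lt : p1 < 1 := by linarith
  have h1p1 : (0:ℝ) < 1 - p1 := by linarith
  obtain ⟨c, hc0, hcβ⟩ : ∃ c : ℝ, 0 ≤ c ∧ c * (1 - β) = p2 :=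
    ⟨p2 / (1 - β), div_nonneg hp20 hβpos.le, div_mul_cancel₀ _ hβpos.ne'⟩
  obtain ⟨d, hd0, hdd⟩ : ∃ d : ℝ, 0 ≤ d ∧ d * (1 - p1) = p3 + p1 * β * c :=
    ⟨(p3 + p1 * β * c) / (1 - p1), div_nonneg (by positivity) h1p1.le,
      div_mul_cancel₀ _ h1p1.ne'⟩
  -- key backwards induction
  have key : ∀ k : ℕ, ∀ i : ℕ, i + k = v → e' i ≤ e i + c ∧ e i ≤ (k : ℝ) * d := by
    intro k
    induction k with
    | zero =>
      intro i hi
      simp only [Nat.add_zero] at hi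
      subst hi
      constructor
      · rw [hev, he'v]; linarith
      · rw [hev]; simp
    | succ k ih =>
      intro i hi
      have hiv : i < v := by omega
      have hnext := ih (i + 1) (by omega)
      have hE := herec i hiv
      have hE' := he'rec i hiv
      have hEC : e' i ≤ e i + c := by
        rcases max_choice (p2 + (1 - p2) * β * e' i + (1 - p2) * (1 - β) * e i)
          (p3 + (1 - p1 - p3) * e' (i + 1) + p1 * β * e' i + p1 * (1 - β) * e i) with h | h
        · rw [h] at hE'
          have hpos : 0 < 1 - (1 - p2) * β := by nlinarith [mul_nonneg hp20 hβ0]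
          have h2 : (1 - (1 - p2) * β) * (e i + c - e' i) = p2 * e i + p2 * β * c := by
            linear_combination (-1 : ℝ) * hE' + hcβ
          nlinarith [mul_nonneg hp20 (he i), mul_nonneg (mul_nonneg hp20 hβ0) hc0]
        · rw [h] at hE'
          have ht : (0:ℝ) ≤ 1 - p1 - p3 := by linarith
          have m1 : (1 - p1 - p3) * e' (i + 1) ≤ (1 - p1 - p3) * (e (i + 1) + c) :=
            mul_le_mul_of_nonneg_left hnext.1 ht
          have m2 : (1 - p1 - p3) * c ≤ 1 * c :=
            mul_le_mul_of_nonneg_right (by linarith) hc0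
          linarith [hE, hE', m1, m2]
      refine ⟨hEC, ?_⟩
      have m3 : p1 * β * e' i ≤ p1 * β * (e i + c) :=
        mul_le_mul_of_nonneg_left hEC (mul_nonneg hp10 hβ0)
      have m4 : (0:ℝ) ≤ p3 * e (i + 1) := mul_nonneg hp30 (he _)
      have m5 : (1 - p1) * e (i + 1) ≤ (1 - p1) * ((k : ℝ) * d) :=
        mul_le_mul_of_nonneg_left hnext.2 h1p1.le
      have h6 : (1 - p1) * e i ≤ (1 - p1) * (((k : ℝ) + 1) * d) := by
        linarith [hE, m3, m4, m5, hdd]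
      have : e i ≤ ((k : ℝ) + 1) * d := (mul_le_mul_iff_right₀ h1p1).mp h6
      push_cast
      linarith
  obtain ⟨h1, h2⟩ := key v 0 (by omega)
  -- final arithmetic
  have hA0 : β * (c * (1 - β)) = β * p2 := by rw [hcβ]
  have hA1 : β * c * (1 - β) ≤ 2 * β * ε := by
    nlinarith [hA0, mul_le_mul_of_nonneg_left hp21 hβ0]
  have hX : (0:ℝ) ≤ β * c * (1 - β) := by positivity
  have hB1 : p1 * (β * c * (1 - β)) ≤ 4 * β * ε ^ 2 := by
    have t1 : p1 * (β * c * (1 - β)) ≤ 2 * ε * (β * c * (1 - β)) :=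
      mul_le_mul_of_nonneg_right hp11 hX
    have t2 : 2 * ε * (β * c * (1 - β)) ≤ 2 * ε * (2 * β * ε) :=
      mul_le_mul_of_nonneg_left hA1 (by positivity)
    linarith [t1, t2]
  have hD1 : d * (1 - 2 * ε) * (1 - β) ≤ 2 * ε ^ 2 * (1 - β) + 4 * β * ε ^ 2 := by
    have t1 : d * (1 - 2 * ε) ≤ d * (1 - p1) :=
      mul_le_mul_of_nonneg_left (by linarith) hd0
    have t2 : d * (1 - 2 * ε) * (1 - β) ≤ d * (1 - p1) * (1 - β) :=
      mul_le_mul_of_nonneg_right t1 hβpos.le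
    have t3 : p3 * (1 - β) ≤ 2 * ε ^ 2 * (1 - β) :=
      mul_le_mul_of_nonneg_right hp31 hβpos.le
    have t4 : d * (1 - p1) * (1 - β) = (p3 + p1 * β * c) * (1 - β) := by rw [hdd]
    linarith [t2, t3, hB1, t4]
  have hvnn : (0:ℝ) ≤ (v : ℝ) := Nat.cast_nonneg v
  have hvd : (v : ℝ) * (d * (1 - 2 * ε) * (1 - β)) ≤ (4 + 4 * β) * ε := by
    have t1 : (v : ℝ) * (d * (1 - 2 * ε) * (1 - β)) ≤
        (v : ℝ) * (2 * ε ^ 2 * (1 - β) + 4 * β * ε ^ 2) :=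
      mul_le_mul_of_nonneg_left hD1 hvnn
    have t2 : (v : ℝ) * (2 * ε ^ 2 * (1 - β) + 4 * β * ε ^ 2) ≤
        (2 / ε) * (2 * ε ^ 2 * (1 - β) + 4 * β * ε ^ 2) :=
      mul_le_mul_of_nonneg_right hv2 (by nlinarith [mul_nonneg (sq_nonneg ε) hβpos.le, mul_nonneg hβ0 (sq_nonneg ε)])
    have heq : (2 / ε) * (2 * ε ^ 2 * (1 - β) + 4 * β * ε ^ 2) = 4 * ε + 4 * β * ε := by
      field_simp
      ring
    linarith
  have hbc : β * c * (1 - β) * (1 - 2 * ε) ≤ 2 * β * ε * (1 - 2 * ε) :=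
    mul_le_mul_of_nonneg_right hA1 h12ε.le
  have hpos : (0:ℝ) < (1 - 2 * ε) * (1 - β) := mul_pos h12ε hβpos
  have hRe : ((8 * β + 4 * (1 - β)) / ((1 - 2 * ε) * (1 - β)) + 2 * β / (1 - β)) * ε *
      ((1 - 2 * ε) * (1 - β)) = (8 * β + 4 * (1 - β)) * ε + 2 * β * ε * (1 - 2 * ε) := by
    field_simp
  have s1 : (1 - β) * e 0 + β * e' 0 ≤ (v : ℝ) * d + β * c := by
    have := mul_le_mul_of_nonneg_left h1 hβ0
    linarith
  have s2 : ((1 - β) * e 0 + β * e' 0) * ((1 - 2 * ε) * (1 - β)) ≤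
      ((v : ℝ) * d + β * c) * ((1 - 2 * ε) * (1 - β)) :=
    mul_le_mul_of_nonneg_right s1 hpos.le
  have hmain : ((1 - β) * e 0 + β * e' 0) * ((1 - 2 * ε) * (1 - β)) ≤
      ((8 * β + 4 * (1 - β)) / ((1 - 2 * ε) * (1 - β)) + 2 * β / (1 - β)) * ε *
      ((1 - 2 * ε) * (1 - β)) := by
    rw [hRe]
    linarith [s2, hvd, hbc]
  exact le_of_mul_le_mul_right hmain hpos
end

section
/- Fix an integer v ≥ 1 and real numbers p1, p2, β with 0 ≤ p1 < 1, 0 ≤ p2 < 1, and 0 ≤ β < 1, and let q, q' be as in the expected-length Bellman recursion. Then for every i < v, q(i) ≥ q(i+1) + 1 and q'(i) ≥ q'(i+1) + 1. -/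
lemma length_bellman_key (p1 p2 β x y : ℝ)
    (hp10 : 0 ≤ p1) (hp11 : p1 < 1) (hp20 : 0 ≤ p2) (hp21 : p2 < 1)
    (hβ0 : 0 ≤ β) (hβ1 : β < 1)
    (hx : 1 - p1 + p1 * β * y ≤ x * (1 - p1 * (1 - β)))
    (hy : p2 + (1 - p2) * (1 - β) * x ≤ y * (1 - (1 - p2) * β) ∨
          1 - p1 + p1 * (1 - β) * x ≤ y * (1 - p1 * β)) :
    1 ≤ x ∧ 1 ≤ y := by
  have hpb : 0 ≤ p1 * β := mul_nonneg hp10 hβ0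
  rcases hy with h | h
  · have hc : 0 < 1 - (1 - p2) * β - p1 * (1 - β) := by nlinarith
    have hx1 : 1 ≤ x := by
      nlinarith [mul_le_mul_of_nonneg_left h hpb,
        mul_le_mul_of_nonneg_left hx (le_of_lt (show (0:ℝ) < 1 - (1 - p2) * β by nlinarith))]
    refine ⟨hx1, ?_⟩
    nlinarith [h, mul_nonneg (mul_nonneg (by linarith : (0:ℝ) ≤ 1 - p2)
      (by linarith : (0:ℝ) ≤ 1 - β)) (by linarith : (0:ℝ) ≤ x - 1),
      (by nlinarith : (0:ℝ) < 1 - (1 - p2) * β)]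
  · have hx1 : 1 ≤ x := by
      nlinarith [mul_le_mul_of_nonneg_left h hpb,
        mul_le_mul_of_nonneg_left hx (le_of_lt (show (0:ℝ) < 1 - p1 * β by nlinarith))]
    refine ⟨hx1, ?_⟩
    nlinarith [h, mul_nonneg (mul_nonneg hp10 (by linarith : (0:ℝ) ≤ 1 - β))
      (by linarith : (0:ℝ) ≤ x - 1), (by nlinarith : (0:ℝ) < 1 - p1 * β)]

/-- In the expected-length Bellman recursion, each step costs at least one transmission. -/
theorem length_bellman_monotone (v : ℕ) (hv : 1 ≤ v) (p1 p2 β : ℝ)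
    (hp10 : 0 ≤ p1) (hp11 : p1 < 1) (hp20 : 0 ≤ p2) (hp21 : p2 < 1)
    (hβ0 : 0 ≤ β) (hβ1 : β < 1)
    (q q' : ℕ → ℝ) (hq : ∀ i, 0 ≤ q i) (hq' : ∀ i, 0 ≤ q' i)
    (hqv : q v = 0) (hq'v : q' v = 0)
    (hqrec : ∀ i < v,
      q i = 1 + (1 - p1) * q (i + 1) + p1 * β * q' i + p1 * (1 - β) * q i)
    (hq'rec : ∀ i < v,
      q' i = max (1 + p2 * q' (i + 1) + (1 - p2) * β * q' i + (1 - p2) * (1 - β) * q i)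
        (1 + (1 - p1) * q' (i + 1) + p1 * β * q' i + p1 * (1 - β) * q i)) :
    ∀ i < v, q i ≥ q (i + 1) + 1 ∧ q' i ≥ q' (i + 1) + 1 := by
  suffices H : ∀ n, ∀ i, i < v → v = i + 1 + n →
      q i ≥ q (i + 1) + 1 ∧ q' i ≥ q' (i + 1) + 1 by
    intro i hi
    exact H (v - i - 1) i hi (by omega)
  intro n
  induction n with
  | zero =>
    intro i hi hvi
    have hiv : i + 1 = v := by omega
    have hB : q (i + 1) = 0 := by rw [hiv]; exact hqv
    have hB' : q' (i + 1) = 0 := by rw [hiv]; exact hq'v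
    have ri := hqrec i hi
    have ri' : 1 + (1 - p1) * q' (i + 1) + p1 * β * q' i + p1 * (1 - β) * q i ≤ q' i :=
      le_of_le_of_eq (le_max_right _ _) (hq'rec i hi).symm
    rw [hB] at ri
    rw [hB'] at ri'
    have key := length_bellman_key p1 p2 β (q i) (q' i) hp10 hp11 hp20 hp21 hβ0 hβ1
      (by nlinarith) (Or.inr (by nlinarith))
    constructor
    · rw [hB]; linarith [key.1]
    · rw [hB']; linarith [key.2]
  | succ n ih =>
    intro i hi hvi
    have hi1 : i + 1 < v := by omega
    obtain ⟨hB, hB'⟩ := ih (i + 1) hi1 (by omega)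
    have ri := hqrec i hi
    have ri1 := hqrec (i + 1) hi1
    have ri' : 1 + (1 - p1) * q' (i + 1) + p1 * β * q' i + p1 * (1 - β) * q i ≤ q' i :=
      le_of_le_of_eq (le_max_right _ _) (hq'rec i hi).symm
    have ri'X : 1 + p2 * q' (i + 1) + (1 - p2) * β * q' i + (1 - p2) * (1 - β) * q i ≤ q' i :=
      le_of_le_of_eq (le_max_left _ _) (hq'rec i hi).symm
    -- x = q i - q (i+1), y = q' i - q' (i+1)
    have hx : 1 - p1 + p1 * β * (q' i - q' (i + 1)) ≤
        (q i - q (i + 1)) * (1 - p1 * (1 - β)) := by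
      have h3 : (1 - p1) * (q (i + 2) + 1) ≤ (1 - p1) * q (i + 1) :=
        mul_le_mul_of_nonneg_left hB (by linarith)
      nlinarith [ri, ri1, h3]
    have hy : p2 + (1 - p2) * (1 - β) * (q i - q (i + 1)) ≤
          (q' i - q' (i + 1)) * (1 - (1 - p2) * β) ∨
        1 - p1 + p1 * (1 - β) * (q i - q (i + 1)) ≤
          (q' i - q' (i + 1)) * (1 - p1 * β) := by
      rcases max_choice (1 + p2 * q' (i + 2) + (1 - p2) * β * q' (i + 1) +
          (1 - p2) * (1 - β) * q (i + 1))
          (1 + (1 - p1) * q' (i + 2) + p1 * β * q' (i + 1) + p1 * (1 - β) * q (i + 1)) with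
        hm | hm
      · left
        have r1' : q' (i + 1) = 1 + p2 * q' (i + 2) + (1 - p2) * β * q' (i + 1) +
            (1 - p2) * (1 - β) * q (i + 1) := (hq'rec (i + 1) hi1).trans hm
        have h3 : p2 * (q' (i + 2) + 1) ≤ p2 * q' (i + 1) :=
          mul_le_mul_of_nonneg_left hB' hp20
        nlinarith [ri'X, r1', h3]
      · right
        have r1' : q' (i + 1) = 1 + (1 - p1) * q' (i + 2) + p1 * β * q' (i + 1) +
            p1 * (1 - β) * q (i + 1) := (hq'rec (i + 1) hi1).trans hm
        have h3 : (1 - p1) * (q' (i + 2) + 1) ≤ (1 - p1) * q' (i + 1) :=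
          mul_le_mul_of_nonneg_left hB' (by linarith)
        nlinarith [ri', r1', h3]
    have key := length_bellman_key p1 p2 β (q i - q (i + 1)) (q' i - q' (i + 1))
      hp10 hp11 hp20 hp21 hβ0 hβ1 hx hy
    exact ⟨by linarith [key.1], by linarith [key.2]⟩
end

section
/- Fix an integer v ≥ 1 and real numbers p1, p2, β with 0 ≤ p1 < 1, 0 ≤ p2 < 1, and 0 ≤ β < 1, and let q, q' be as in the expected-length Bellman recursion. Then for every i ≤ v, q'(i) ≤ 1/(1−β) + q(i). -/
/-- In the expected-length Bellman recursion, `q'(i) ≤ 1/(1-β) + q(i)`. -/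
theorem length_bellman_qprime_bound (v : ℕ) (hv : 1 ≤ v) (p1 p2 β : ℝ)
    (hp10 : 0 ≤ p1) (hp11 : p1 < 1) (hp20 : 0 ≤ p2) (hp21 : p2 < 1)
    (hβ0 : 0 ≤ β) (hβ1 : β < 1)
    (q q' : ℕ → ℝ) (hq : ∀ i, 0 ≤ q i) (hq' : ∀ i, 0 ≤ q' i)
    (hqv : q v = 0) (hq'v : q' v = 0)
    (hqrec : ∀ i < v,
      q i = 1 + (1 - p1) * q (i + 1) + p1 * β * q' i + p1 * (1 - β) * q i)
    (hq'rec : ∀ i < v,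
      q' i = max (1 + p2 * q' (i + 1) + (1 - p2) * β * q' i + (1 - p2) * (1 - β) * q i)
        (1 + (1 - p1) * q' (i + 1) + p1 * β * q' i + p1 * (1 - β) * q i)) :
    ∀ i ≤ v, q' i ≤ 1 / (1 - β) + q i := by
  have hβp : (0:ℝ) < 1 - β := by linarith
  set c : ℝ := 1 / (1 - β) with hcdef
  have hc : (1 - β) * c = 1 := mul_one_div_cancel (by linarith)
  have hc0 : 0 ≤ c := by positivity
  have key : ∀ d i, i + d = v → q' i ≤ c + q i := by
    intro d
    induction d with
    | zero =>
      intro i h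
      have : i = v := by omega
      subst this
      rw [hqv, hq'v]
      linarith
    | succ d ih =>
      intro i h
      have hiv : i < v := by omega
      have ih1 : q' (i + 1) ≤ c + q (i + 1) := ih (i + 1) (by omega)
      have hq1 := hqrec i hiv
      have hq2 := hq'rec i hiv
      rcases max_cases (1 + p2 * q' (i + 1) + (1 - p2) * β * q' i + (1 - p2) * (1 - β) * q i)
        (1 + (1 - p1) * q' (i + 1) + p1 * β * q' i + p1 * (1 - β) * q i) with
        ⟨hmax, _⟩ | ⟨hmax, _⟩ <;> rw [hmax] at hq2
      · -- case A
        have hK : 0 < (1 - p1) * (1 - β) + β * p2 := by nlinarith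
        have ih1' : p2 * q' (i + 1) ≤ p2 * (c + q (i + 1)) :=
          mul_le_mul_of_nonneg_left ih1 hp20
        nlinarith [mul_le_mul_of_nonneg_left ih1' (sub_nonneg.2 hp11.le),
          mul_nonneg hp10 (mul_nonneg hp20 hc0),
          mul_le_mul_of_nonneg_left (le_of_eq hq1) hp20,
          mul_le_mul_of_nonneg_left (le_of_eq hq1.symm) hp20]
      · -- case B
        have ih1' : (1 - p1) * q' (i + 1) ≤ (1 - p1) * (c + q (i + 1)) :=
          mul_le_mul_of_nonneg_left ih1 (by linarith)
        nlinarith [mul_nonneg hp10 hc0]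
  intro i hi
  exact key (v - i) i (by omega)
end

section
/- Fix an integer v ≥ 1 and real numbers p1, p2, β with 0 ≤ p1 < 1, 0 ≤ p2 < 1, and 0 ≤ β < 1, and let q, q' be as in the expected-length Bellman recursion. Then for every i ≤ v, q(i) ≤ (1 + p1/((1−p1)(1−β))) · (v − i). -/
/-- Linear bound on `q` in the expected-length Bellman recursion. -/
theorem length_bellman_linear_bound (v : ℕ) (hv : 1 ≤ v) (p1 p2 β : ℝ)
    (hp10 : 0 ≤ p1) (hp11 : p1 < 1) (hp20 : 0 ≤ p2) (hp21 : p2 < 1)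
    (hβ0 : 0 ≤ β) (hβ1 : β < 1)
    (q q' : ℕ → ℝ) (hq : ∀ i, 0 ≤ q i) (hq' : ∀ i, 0 ≤ q' i)
    (hqv : q v = 0) (hq'v : q' v = 0)
    (hqrec : ∀ i < v,
      q i = 1 + (1 - p1) * q (i + 1) + p1 * β * q' i + p1 * (1 - β) * q i)
    (hq'rec : ∀ i < v,
      q' i = max (1 + p2 * q' (i + 1) + (1 - p2) * β * q' i + (1 - p2) * (1 - β) * q i)
        (1 + (1 - p1) * q' (i + 1) + p1 * β * q' i + p1 * (1 - β) * q i)) :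
    ∀ i ≤ v, q i ≤ (1 + p1 / ((1 - p1) * (1 - β))) * ((v : ℝ) - i) := by
  have hp1 : 0 < 1 - p1 := by linarith
  have hb : 0 < 1 - β := by linarith
  have hp2 : 0 < 1 - p2 := by linarith
  have hA : 0 < (1 - p1) * (1 - β) := mul_pos hp1 hb
  have hAb : 0 < (1 - p1) * (1 - β) + β := by nlinarith
  have key : ∀ d : ℕ, ∀ i : ℕ, i + d = v →
      q i * ((1 - p1) * (1 - β)) ≤ ((1 - p1) * (1 - β) + p1) * d ∧
      q' i * ((1 - p1) * (1 - β)) ≤ ((1 - p1) * (1 - β) + p1) * d + (1 - p1) := by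
    intro d
    induction d with
    | zero =>
      intro i hi
      have hiv : i = v := by omega
      subst hiv
      constructor
      · simp [hqv]
      · simp [hq'v]; linarith
    | succ d ih =>
      intro i hi
      push_cast
      have hiv : i < v := by omega
      obtain ⟨hu, hw⟩ := ih (i + 1) (by omega)
      have hx := hqrec i hiv
      have hymax := hq'rec i hiv
      have hyb : q' i * ((1 - p1) * (1 - β)) ≤
          ((1 - p1) * (1 - β) + p1) * (d + 1) + (1 - p1) := by
        rcases max_choice (1 + p2 * q' (i + 1) + (1 - p2) * β * q' i + (1 - p2) * (1 - β) * q i)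
          (1 + (1 - p1) * q' (i + 1) + p1 * β * q' i + p1 * (1 - β) * q i) with hm | hm
        · -- Byzantine sensor keeps lying (p2 branch)
          have he : q' i = 1 + p2 * q' (i + 1) + (1 - p2) * β * q' i + (1 - p2) * (1 - β) * q i :=
            hymax.trans hm
          have hDa : 0 < (1 - β + p2 * β) * ((1 - p1) * (1 - β) + β)
              - p1 * β * (1 - β) * (1 - p2) := by nlinarith
          have hid : ((1 - β + p2 * β) * ((1 - p1) * (1 - β) + β)
                - p1 * β * (1 - β) * (1 - p2)) *
              ((((1 - p1) * (1 - β) + p1) * (↑d + 1) + (1 - p1))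
                - q' i * ((1 - p1) * (1 - β))) =
              p2 * ((1 - p1) * (1 - β) + β) *
                ((((1 - p1) * (1 - β) + p1) * ↑d + (1 - p1))
                  - q' (i + 1) * ((1 - p1) * (1 - β))) +
              (1 - p2) * (1 - β) * (1 - p1) *
                ((((1 - p1) * (1 - β) + p1) * ↑d) - q (i + 1) * ((1 - p1) * (1 - β))) +
              p1 * p2 * ((1 - p1) * (1 - β) + β) := by
            linear_combination (-((1 - p1) * (1 - β)) * ((1 - p1) * (1 - β) + β)) * he
              + (-((1 - p1) * (1 - β)) * (1 - p2) * (1 - β)) * hx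
          have h2 : 0 ≤ ((1 - β + p2 * β) * ((1 - p1) * (1 - β) + β)
              - p1 * β * (1 - β) * (1 - p2)) *
              ((((1 - p1) * (1 - β) + p1) * (↑d + 1) + (1 - p1))
                - q' i * ((1 - p1) * (1 - β))) := by
            rw [hid]
            have t1 := mul_nonneg (mul_nonneg hp20 hAb.le) (sub_nonneg.2 hw)
            have t2 := mul_nonneg (mul_nonneg (mul_nonneg hp2.le hb.le) hp1.le)
              (sub_nonneg.2 hu)
            have t3 := mul_nonneg (mul_nonneg hp10 hp20) hAb.le
            linarith
          have h3 := (mul_nonneg_iff_of_pos_left hDa).mp h2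
          linarith
        · -- Byzantine sensor behaves like honest one (p1 branch)
          have he : q' i = 1 + (1 - p1) * q' (i + 1) + p1 * β * q' i + p1 * (1 - β) * q i :=
            hymax.trans hm
          have hid : (1 - p1) *
              ((((1 - p1) * (1 - β) + p1) * (↑d + 1) + (1 - p1))
                - q' i * ((1 - p1) * (1 - β))) =
              ((1 - p1) * (1 - β) + β) * (1 - p1) *
                ((((1 - p1) * (1 - β) + p1) * ↑d + (1 - p1))
                  - q' (i + 1) * ((1 - p1) * (1 - β))) +
              p1 * (1 - β) * (1 - p1) *
                ((((1 - p1) * (1 - β) + p1) * ↑d) - q (i + 1) * ((1 - p1) * (1 - β))) +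
              p1 * ((1 - p1) * (1 - β) + β) * (1 - p1) := by
            linear_combination (-((1 - p1) * (1 - β)) * ((1 - p1) * (1 - β) + β)) * he
              + (-((1 - p1) * (1 - β)) * p1 * (1 - β)) * hx
          have h2 : 0 ≤ (1 - p1) *
              ((((1 - p1) * (1 - β) + p1) * (↑d + 1) + (1 - p1))
                - q' i * ((1 - p1) * (1 - β))) := by
            rw [hid]
            have t1 := mul_nonneg (mul_nonneg hAb.le hp1.le) (sub_nonneg.2 hw)
            have t2 := mul_nonneg (mul_nonneg (mul_nonneg hp10 hb.le) hp1.le)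
              (sub_nonneg.2 hu)
            have t3 := mul_nonneg (mul_nonneg hp10 hAb.le) hp1.le
            linarith
          have h3 := (mul_nonneg_iff_of_pos_left hp1).mp h2
          linarith
      refine ⟨?_, hyb⟩
      have hid : ((1 - p1) * (1 - β) + β) *
          ((((1 - p1) * (1 - β) + p1) * (↑d + 1)) - q i * ((1 - p1) * (1 - β))) =
          (1 - p1) * ((((1 - p1) * (1 - β) + p1) * ↑d) - q (i + 1) * ((1 - p1) * (1 - β))) +
          p1 * β * ((((1 - p1) * (1 - β) + p1) * (↑d + 1) + (1 - p1))
            - q' i * ((1 - p1) * (1 - β))) := by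
        linear_combination (-((1 - p1) * (1 - β))) * hx
      have h2 : 0 ≤ ((1 - p1) * (1 - β) + β) *
          ((((1 - p1) * (1 - β) + p1) * (↑d + 1)) - q i * ((1 - p1) * (1 - β))) := by
        rw [hid]
        have t1 := mul_nonneg hp1.le (sub_nonneg.2 hu)
        have t2 := mul_nonneg (mul_nonneg hp10 hβ0) (sub_nonneg.2 hyb)
        linarith
      have h3 := (mul_nonneg_iff_of_pos_left hAb).mp h2
      linarith
  intro i hi
  obtain ⟨h1, _⟩ := key (v - i) i (by omega)
  have hcast : ((v - i : ℕ) : ℝ) = (v : ℝ) - i := by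
    push_cast [Nat.cast_sub hi]; ring
  rw [hcast] at h1
  have hgoal : (1 + p1 / ((1 - p1) * (1 - β))) * ((v : ℝ) - i) =
      (((1 - p1) * (1 - β) + p1) * ((v : ℝ) - i)) / ((1 - p1) * (1 - β)) := by
    field_simp
  rw [hgoal, le_div_iff₀ hA]
  linarith
end

section
/- Fix an integer v ≥ 1 and real numbers p1, p2, β with 0 ≤ p1 < 1, 0 ≤ p2 < 1, and 0 ≤ β < 1, and let q, q' be as in the expected-length Bellman recursion. Then (1−β) q(0) + β q'(0) ≤ (1 + p1/((1−p1)(1−β))) · v + β/(1−β). -/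
set_option maxHeartbeats 800000 in
lemma step_bound (p1 p2 β a b S x y X Y : ℝ)
    (hp10 : 0 ≤ p1) (hp11 : p1 < 1) (hp20 : 0 ≤ p2) (hp21 : p2 < 1)
    (hβ0 : 0 ≤ β) (hβ1 : β < 1)
    (ha : a * (1 - p1) = 1 + p1 * β * b) (hb1 : b * (1 - β) = 1)
    (hb0 : 0 ≤ b) (ha1 : 1 ≤ a)
    (hX : X ≤ S) (hY : Y ≤ S + b)
    (h1 : x = 1 + (1 - p1) * X + p1 * β * y + p1 * (1 - β) * x)
    (h2 : y = 1 + p2 * Y + (1 - p2) * β * y + (1 - p2) * (1 - β) * x ∨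
          y = 1 + (1 - p1) * Y + p1 * β * y + p1 * (1 - β) * x) :
    x ≤ S + a ∧ y ≤ S + a + b := by
  have e1 : x * (1 - p1 * (1 - β)) = 1 + (1 - p1) * X + p1 * β * y := by
    linear_combination h1
  have hp1β : p1 * β < 1 := by nlinarith
  have hp2β : (1 - p2) * β < 1 := by nlinarith
  have ha0 : (0:ℝ) ≤ a - 1 := by linarith
  rcases h2 with hA | hB
  · -- case A
    have e2 : y * (1 - (1 - p2) * β) = 1 + p2 * Y + (1 - p2) * (1 - β) * x := by
      linear_combination hA
    have c1 : (0:ℝ) ≤ (1 - (1 - p2) * β) * (1 - p1) := by nlinarith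
    have c2 : (0:ℝ) ≤ p1 * β * p2 := by positivity
    have key : x * (1 - (1 - p2) * β - p1 * (1 - β)) =
        (1 - (1 - p2) * β) + (1 - (1 - p2) * β) * (1 - p1) * X + p1 * β + p1 * β * p2 * Y := by
      linear_combination (1 - (1 - p2) * β) * e1 + p1 * β * e2
    have hK : (0:ℝ) < 1 - (1 - p2) * β - p1 * (1 - β) := by nlinarith
    have tX : (1 - (1 - p2) * β) * (1 - p1) * X ≤ (1 - (1 - p2) * β) * (1 - p1) * S :=
      mul_le_mul_of_nonneg_left hX c1
    have tY : p1 * β * p2 * Y ≤ p1 * β * p2 * (S + b) :=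
      mul_le_mul_of_nonneg_left hY c2
    have diffx : (S + a) * (1 - (1 - p2) * β - p1 * (1 - β)) -
        ((1 - (1 - p2) * β) + (1 - (1 - p2) * β) * (1 - p1) * S + p1 * β + p1 * β * p2 * (S + b))
        = p1 * p2 * β * (a - 1) := by
      linear_combination (1 - (1 - p2) * β) * ha + p1 * β * (1 - p2) * hb1
    have hx2 : x * (1 - (1 - p2) * β - p1 * (1 - β)) ≤
        (S + a) * (1 - (1 - p2) * β - p1 * (1 - β)) := by
      have hpp : (0:ℝ) ≤ p1 * p2 * β * (a - 1) := by positivity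
      linarith
    have hx : x ≤ S + a := (mul_le_mul_iff_of_pos_right hK).mp hx2
    refine ⟨hx, ?_⟩
    have hpos : (0:ℝ) < 1 - (1 - p2) * β := by linarith
    have t1 : p2 * Y ≤ p2 * (S + b) := mul_le_mul_of_nonneg_left hY hp20
    have t2 : (1 - p2) * (1 - β) * x ≤ (1 - p2) * (1 - β) * (S + a) :=
      mul_le_mul_of_nonneg_left hx (by nlinarith)
    have hy1 : y * (1 - (1 - p2) * β) ≤ 1 + p2 * (S + b) + (1 - p2) * (1 - β) * (S + a) := by
      rw [e2]; linarith
    have diff : (S + a + b) * (1 - (1 - p2) * β)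
        - (1 + p2 * (S + b) + (1 - p2) * (1 - β) * (S + a)) = p2 * (a - 1) := by
      linear_combination (1 - p2) * hb1
    have hy2 : y * (1 - (1 - p2) * β) ≤ (S + a + b) * (1 - (1 - p2) * β) := by
      have : (0:ℝ) ≤ p2 * (a - 1) := by positivity
      linarith
    exact (mul_le_mul_iff_of_pos_right hpos).mp hy2
  · -- case B
    have e2 : y * (1 - p1 * β) = 1 + (1 - p1) * Y + p1 * (1 - β) * x := by
      linear_combination hB
    have c1 : (0:ℝ) ≤ (1 - p1 * β) * (1 - p1) := by nlinarith
    have c2 : (0:ℝ) ≤ p1 * β * (1 - p1) :=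
      mul_nonneg (mul_nonneg hp10 hβ0) (by linarith)
    have key : x * (1 - p1) =
        (1 - p1 * β) + (1 - p1 * β) * (1 - p1) * X + p1 * β + p1 * β * (1 - p1) * Y := by
      linear_combination (1 - p1 * β) * e1 + p1 * β * e2
    have hK : (0:ℝ) < 1 - p1 := by linarith
    have tX : (1 - p1 * β) * (1 - p1) * X ≤ (1 - p1 * β) * (1 - p1) * S :=
      mul_le_mul_of_nonneg_left hX c1
    have tY : p1 * β * (1 - p1) * Y ≤ p1 * β * (1 - p1) * (S + b) :=
      mul_le_mul_of_nonneg_left hY c2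
    have diffx : (S + a) * (1 - p1) -
        ((1 - p1 * β) + (1 - p1 * β) * (1 - p1) * S + p1 * β + p1 * β * (1 - p1) * (S + b))
        = p1 * p1 * β * b := by
      linear_combination ha
    have hx2 : x * (1 - p1) ≤ (S + a) * (1 - p1) := by
      have hpp : (0:ℝ) ≤ p1 * p1 * β * b := by positivity
      linarith
    have hx : x ≤ S + a := (mul_le_mul_iff_of_pos_right hK).mp hx2
    refine ⟨hx, ?_⟩
    have hpos : (0:ℝ) < 1 - p1 * β := by linarith
    have t1 : (1 - p1) * Y ≤ (1 - p1) * (S + b) :=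
      mul_le_mul_of_nonneg_left hY (by linarith)
    have t2 : p1 * (1 - β) * x ≤ p1 * (1 - β) * (S + a) :=
      mul_le_mul_of_nonneg_left hx (by nlinarith)
    have hy1 : y * (1 - p1 * β) ≤ 1 + (1 - p1) * (S + b) + p1 * (1 - β) * (S + a) := by
      rw [e2]; linarith
    have diff : (S + a + b) * (1 - p1 * β)
        - (1 + (1 - p1) * (S + b) + p1 * (1 - β) * (S + a))
        = p1 * β * b + p1 := by
      linear_combination ha + p1 * hb1
    have hy2 : y * (1 - p1 * β) ≤ (S + a + b) * (1 - p1 * β) := by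
      have h0 : (0:ℝ) ≤ p1 * β * b := by positivity
      linarith
    exact (mul_le_mul_iff_of_pos_right hpos).mp hy2

/-- Bound on the expected total number of chunk transmissions `(1-β) q(0) + β q'(0)`. -/
theorem length_bellman_total_bound (v : ℕ) (hv : 1 ≤ v) (p1 p2 β : ℝ)
    (hp10 : 0 ≤ p1) (hp11 : p1 < 1) (hp20 : 0 ≤ p2) (hp21 : p2 < 1)
    (hβ0 : 0 ≤ β) (hβ1 : β < 1)
    (q q' : ℕ → ℝ) (hq : ∀ i, 0 ≤ q i) (hq' : ∀ i, 0 ≤ q' i)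
    (hqv : q v = 0) (hq'v : q' v = 0)
    (hqrec : ∀ i < v,
      q i = 1 + (1 - p1) * q (i + 1) + p1 * β * q' i + p1 * (1 - β) * q i)
    (hq'rec : ∀ i < v,
      q' i = max (1 + p2 * q' (i + 1) + (1 - p2) * β * q' i + (1 - p2) * (1 - β) * q i)
        (1 + (1 - p1) * q' (i + 1) + p1 * β * q' i + p1 * (1 - β) * q i)) :
    (1 - β) * q 0 + β * q' 0 ≤
      (1 + p1 / ((1 - p1) * (1 - β))) * (v : ℝ) + β / (1 - β) := by
  have hβp : (0:ℝ) < 1 - β := by linarith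
  have hpp : (0:ℝ) < 1 - p1 := by linarith
  set b : ℝ := 1 / (1 - β) with hbdef
  set a : ℝ := 1 + p1 / ((1 - p1) * (1 - β)) with hadef
  clear_value a b
  have hb1 : b * (1 - β) = 1 := by
    rw [hbdef]; field_simp
  have ha : a * (1 - p1) = 1 + p1 * β * b := by
    rw [hadef, hbdef]; field_simp; ring
  have hb0 : (0:ℝ) ≤ b := by rw [hbdef]; positivity
  have ha1 : (1:ℝ) ≤ a := by
    rw [hadef]
    have : (0:ℝ) ≤ p1 / ((1 - p1) * (1 - β)) := by positivity
    linarith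
  have main : ∀ k, k ≤ v → q (v - k) ≤ a * k ∧ q' (v - k) ≤ a * k + b := by
    intro k
    induction k with
    | zero =>
      intro _
      simp only [Nat.sub_zero, Nat.cast_zero, mul_zero, zero_add, hqv, hq'v]
      exact ⟨le_refl 0, hb0⟩
    | succ k ih =>
      intro hk1
      have hk : k ≤ v := Nat.le_of_succ_le hk1
      obtain ⟨hX, hY⟩ := ih hk
      have hi : v - (k + 1) < v := by omega
      have hi1 : v - (k + 1) + 1 = v - k := by omega
      have h1 := hqrec (v - (k + 1)) hi
      have h2' := hq'rec (v - (k + 1)) hi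
      rw [hi1] at h1 h2'
      have h2 : q' (v - (k + 1)) =
          1 + p2 * q' (v - k) + (1 - p2) * β * q' (v - (k + 1)) +
            (1 - p2) * (1 - β) * q (v - (k + 1)) ∨
          q' (v - (k + 1)) =
          1 + (1 - p1) * q' (v - k) + p1 * β * q' (v - (k + 1)) +
            p1 * (1 - β) * q (v - (k + 1)) := by
        rcases max_choice (1 + p2 * q' (v - k) + (1 - p2) * β * q' (v - (k + 1)) +
            (1 - p2) * (1 - β) * q (v - (k + 1)))
          (1 + (1 - p1) * q' (v - k) + p1 * β * q' (v - (k + 1)) +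
            p1 * (1 - β) * q (v - (k + 1))) with h | h
        · exact Or.inl (h2'.trans h)
        · exact Or.inr (h2'.trans h)
      have step := step_bound p1 p2 β a b (a * k) (q (v - (k + 1))) (q' (v - (k + 1)))
        (q (v - k)) (q' (v - k)) hp10 hp11 hp20 hp21 hβ0 hβ1 ha hb1 hb0 ha1 hX hY h1 h2
      push_cast
      exact ⟨by linarith [step.1], by linarith [step.2]⟩
  obtain ⟨h0, h0'⟩ := main v le_rfl
  rw [Nat.sub_self] at h0 h0'
  have t1 : (1 - β) * q 0 ≤ (1 - β) * (a * v) :=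
    mul_le_mul_of_nonneg_left h0 (by linarith)
  have t2 : β * q' 0 ≤ β * (a * v + b) := mul_le_mul_of_nonneg_left h0' hβ0
  have hbb : β / (1 - β) = β * b := by rw [hbdef]; ring
  have goal_eq : a * (v : ℝ) + β / (1 - β) = (1 - β) * (a * v) + β * (a * v + b) := by
    rw [hbb]; ring
  linarith
end
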